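/- Let ζ, η ∈ ℂ with |ζ| = |η| = 1, and let u, v : ℕ → 𝔻 be sequences with u_n → ζ and v_n → η. Then u and v (which are admissible with respect to the base point 0 and the Poincaré distance) are equivalent admissible sequences if and only if ζ = η. -/

import Mathlib

open Filter Set

noncomputable section

/-- The inverse hyperbolic tangent: `artanh r = (1/2) log ((1+r)/(1-r))`. -/
def artanh (r : ℝ) : ℝ := (1 / 2) * Real.log ((1 + r) / (1 - r))

/-- The Poincaré (Kobayashi) distance on the unit disc
`ρ(z,w) = artanh |(z - w)/(1 - conj w * z)|`. -/
def pd (z w : ℂ) : ℝ := artanh (‖(z - w) / (1 - (starRingEnd ℂ) w * z)‖)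

/-- The horosphere in the unit disc of a sequence `u` with respect to base point `x`
and radius `R`. -/
def discE (x : ℂ) (u : ℕ → ℂ) (R : ℝ) : Set ℂ :=
  {z : ℂ | ‖z‖ < 1 ∧
    Filter.limsup (fun n => pd z (u n) - pd x (u n)) Filter.atTop < (1 / 2) * Real.log R}

/-- Two sequences in the unit disc are equivalent (as admissible sequences with respect to
the base point `x`) if every horosphere of one contains a horosphere of the other. -/
def EquivAdm (x : ℂ) (u v : ℕ → ℂ) : Prop :=
  ∀ R > (0 : ℝ), (∃ R' > (0 : ℝ), discE x u R' ⊆ discE x v R) ∧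
    (∃ R'' > (0 : ℝ), discE x v R'' ⊆ discE x u R)

lemma key_normSq (z w : ℂ) :
    ‖1 - (starRingEnd ℂ) w * z‖ ^ 2 - ‖z - w‖ ^ 2
      = (1 - ‖z‖ ^ 2) * (1 - ‖w‖ ^ 2) := by
  simp only [Complex.sq_norm, Complex.normSq_apply, Complex.sub_re, Complex.sub_im,
    Complex.mul_re, Complex.mul_im, Complex.one_re, Complex.one_im,
    Complex.conj_re, Complex.conj_im]
  ring

lemma A_lt_B (z w : ℂ) (hz : ‖z‖ < 1) (hw : ‖w‖ < 1) :
    ‖z - w‖ < ‖1 - (starRingEnd ℂ) w * z‖ := by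
  have h := key_normSq z w
  have h1 : 0 < 1 - ‖z‖ ^ 2 := by nlinarith [norm_nonneg z]
  have h2 : 0 < 1 - ‖w‖ ^ 2 := by nlinarith [norm_nonneg w]
  have : ‖z - w‖ ^ 2 < ‖1 - (starRingEnd ℂ) w * z‖ ^ 2 := by nlinarith
  exact lt_of_pow_lt_pow_left₀ 2 (norm_nonneg _) this

lemma pd_formula (z w : ℂ) (hz : ‖z‖ < 1) (hw : ‖w‖ < 1) :
    pd z w - pd 0 w = (1 / 2) * Real.log
      ((‖1 - (starRingEnd ℂ) w * z‖ + ‖z - w‖) ^ 2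
        / ((1 - ‖z‖ ^ 2) * (1 + ‖w‖) ^ 2)) := by
  set A := ‖z - w‖ with hA
  set B := ‖1 - (starRingEnd ℂ) w * z‖ with hB
  set ww := ‖w‖ with hww
  have hAB : A < B := A_lt_B z w hz hw
  have hA0 : 0 ≤ A := norm_nonneg _
  have hB0 : 0 < B := lt_of_le_of_lt hA0 hAB
  have hw0 : 0 ≤ ww := norm_nonneg w
  have hw1 : 0 < 1 - ww := by linarith
  have hz1 : 0 < 1 - ‖z‖ ^ 2 := by nlinarith [norm_nonneg z]
  have key := key_normSq z w
  rw [← hA, ← hB, ← hww] at key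
  have e0 : pd 0 w = (1/2) * Real.log ((1 + ww) / (1 - ww)) := by
    simp [pd, artanh, hww]
  have e1 : pd z w = (1/2) * Real.log ((B + A) / (B - A)) := by
    rw [pd, artanh, norm_div, ← hA, ← hB]
    have hd : 0 < 1 - A / B := sub_pos.mpr ((div_lt_one hB0).mpr hAB)
    have : (1 + A / B) / (1 - A / B) = (B + A) / (B - A) := by
      rw [div_eq_div_iff (by linarith) (by linarith)]
      field_simp
    rw [this]
  rw [e0, e1, ← mul_sub,
    ← Real.log_div (div_pos (by linarith) (by linarith)).ne' (div_pos (by linarith) hw1).ne']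
  congr 2
  have h1 : B - A ≠ 0 := by linarith
  have h2 : (1:ℝ) + ww ≠ 0 := by linarith
  have h3 : (1:ℝ) - ww ≠ 0 := by linarith
  have h4 : (1:ℝ) - ‖z‖ ^ 2 ≠ 0 := by linarith
  rw [div_div_div_eq, div_eq_div_iff (mul_ne_zero h1 h2) (mul_ne_zero h4 (pow_ne_zero 2 h2))]
  linear_combination -(B + A) * (1 + ww) * key

lemma abs_one_sub_conj (ζ z : ℂ) (hζ : ‖ζ‖ = 1) :
    ‖1 - (starRingEnd ℂ) ζ * z‖ = ‖ζ - z‖ := by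
  have h1 : (starRingEnd ℂ) ζ * ζ = 1 := by
    rw [mul_comm, Complex.mul_conj]
    norm_cast
    rw [← Complex.sq_norm, hζ]; norm_num
  calc ‖1 - (starRingEnd ℂ) ζ * z‖
      = ‖(starRingEnd ℂ) ζ * (ζ - z)‖ := by rw [mul_sub, h1]
    _ = ‖(starRingEnd ℂ) ζ‖ * ‖ζ - z‖ := norm_mul _ _
    _ = ‖ζ - z‖ := by rw [Complex.norm_conj, hζ, one_mul]

lemma tendsto_pd_diff (ζ z : ℂ) (hζ : ‖ζ‖ = 1) (hz : ‖z‖ < 1)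
    (u : ℕ → ℂ) (hu : ∀ n, ‖u n‖ < 1)
    (hcu : Filter.Tendsto u Filter.atTop (nhds ζ)) :
    Filter.Tendsto (fun n => pd z (u n) - pd 0 (u n)) Filter.atTop
      (nhds ((1/2) * Real.log (‖ζ - z‖ ^ 2 / (1 - ‖z‖ ^ 2)))) := by
  have hz1 : 0 < 1 - ‖z‖ ^ 2 := by
    nlinarith [norm_nonneg z]
  set G : ℂ → ℝ := fun w =>
    (‖1 - (starRingEnd ℂ) w * z‖ + ‖z - w‖) ^ 2
      / ((1 - ‖z‖ ^ 2) * (1 + ‖w‖) ^ 2) with hG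
  have hGcont : Continuous fun w =>
      (‖1 - (starRingEnd ℂ) w * z‖ + ‖z - w‖) ^ 2 := by
    continuity
  have hGden : Continuous fun w : ℂ => (1 - ‖z‖ ^ 2) * (1 + ‖w‖) ^ 2 := by
    continuity
  have hden_ne : (1 - ‖z‖ ^ 2) * (1 + ‖ζ‖) ^ 2 ≠ 0 := by
    rw [hζ]; positivity
  have hGtend : Filter.Tendsto (fun n => G (u n)) Filter.atTop (nhds (G ζ)) :=
    (((hGcont.tendsto ζ).div (hGden.tendsto ζ) hden_ne)).comp hcu
  have hGζ : G ζ = ‖ζ - z‖ ^ 2 / (1 - ‖z‖ ^ 2) := by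
    have h2 : ‖z - ζ‖ = ‖ζ - z‖ := by
      rw [← norm_neg, neg_sub]
    rw [hG]
    simp only [abs_one_sub_conj ζ z hζ, h2, hζ]
    rw [div_eq_div_iff (by positivity) (by positivity)]
    ring
  have hGζpos : 0 < G ζ := by
    rw [hGζ]
    have : ζ ≠ z := by
      intro h; rw [h] at hζ; exact absurd hζ (ne_of_lt hz)
    have : 0 < ‖ζ - z‖ := by
      simpa [sub_eq_zero] using this
    positivity
  have hlog : Filter.Tendsto (fun n => (1/2) * Real.log (G (u n))) Filter.atTop
      (nhds ((1/2) * Real.log (G ζ))) :=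
    (((Real.continuousAt_log hGζpos.ne').tendsto).comp hGtend).const_mul _
  rw [hGζ] at hlog
  refine hlog.congr fun n => ?_
  rw [pd_formula z (u n) hz (hu n)]

lemma discE_eq (ζ : ℂ) (hζ : ‖ζ‖ = 1) (u : ℕ → ℂ)
    (hu : ∀ n, ‖u n‖ < 1) (hcu : Filter.Tendsto u Filter.atTop (nhds ζ))
    (R : ℝ) (hR : 0 < R) :
    discE 0 u R = {z : ℂ | ‖z‖ < 1 ∧
      ‖ζ - z‖ ^ 2 < R * (1 - ‖z‖ ^ 2)} := by
  ext z
  simp only [discE, mem_setOf_eq]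
  refine and_congr_right fun hz => ?_
  have ht := tendsto_pd_diff ζ z hζ hz u hu hcu
  rw [ht.limsup_eq]
  have hz1 : 0 < 1 - ‖z‖ ^ 2 := by nlinarith [norm_nonneg z]
  have hne : ζ ≠ z := fun h => absurd hζ (by rw [h]; exact ne_of_lt hz)
  have hζz : 0 < ‖ζ - z‖ := by simpa [sub_eq_zero] using hne
  rw [mul_lt_mul_iff_right₀ (by norm_num : (0:ℝ) < 1/2),
    Real.log_lt_log_iff (by positivity) hR, div_lt_iff₀ hz1]

theorem equivAdm_iff_same_limit (ζ η : ℂ) (hζ : ‖ζ‖ = 1) (hη : ‖η‖ = 1)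
    (u v : ℕ → ℂ) (hu : ∀ n, ‖u n‖ < 1) (hv : ∀ n, ‖v n‖ < 1)
    (hcu : Filter.Tendsto u Filter.atTop (nhds ζ))
    (hcv : Filter.Tendsto v Filter.atTop (nhds η)) :
    EquivAdm 0 u v ↔ ζ = η := by
  constructor
  · intro h
    by_contra hne
    set d := ‖ζ - η‖ with hdd
    have hd : 0 < d := by simpa [hdd, sub_eq_zero] using hne
    have hd2 : d ≤ 2 := by
      calc d ≤ ‖ζ‖ + ‖η‖ := by
              simpa using norm_sub_le_norm_sub_add_norm_sub ζ 0 η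
        _ = 2 := by rw [hζ, hη]; norm_num
    obtain ⟨⟨R', hR', hsub⟩, -⟩ := h 1 one_pos
    rw [discE_eq ζ hζ u hu hcu R' hR', discE_eq η hη v hv hcv 1 one_pos] at hsub
    set ε := min R' (min (d/2) (d^2/8)) / 2 with hε
    have hε0 : 0 < ε := by
      have : 0 < min R' (min (d/2) (d^2/8)) :=
        lt_min hR' (lt_min (by positivity) (by positivity))
      positivity
    have hεR' : ε < R' := by
      have h1 : min R' (min (d/2) (d^2/8)) ≤ R' := min_le_left _ _
      rw [hε]; linarith
    have hεd4 : ε ≤ d/4 := by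
      have h1 : min R' (min (d/2) (d^2/8)) ≤ d/2 :=
        le_trans (min_le_right _ _) (min_le_left _ _)
      rw [hε]; linarith
    have hεd16 : ε ≤ d^2/16 := by
      have h1 : min R' (min (d/2) (d^2/8)) ≤ d^2/8 :=
        le_trans (min_le_right _ _) (min_le_right _ _)
      rw [hε]; linarith
    have hε1 : ε ≤ 1/2 := by nlinarith
    set z : ℂ := ((1 - ε : ℝ) : ℂ) * ζ with hzdef
    have habsz : ‖z‖ = 1 - ε := by
      rw [hzdef, norm_mul, hζ, mul_one, Complex.norm_real, Real.norm_eq_abs, abs_of_nonneg (by linarith)]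
    have hζz : ‖ζ - z‖ = ε := by
      have : ζ - z = ((ε : ℝ) : ℂ) * ζ := by rw [hzdef]; push_cast; ring
      rw [this, norm_mul, hζ, mul_one, Complex.norm_real, Real.norm_eq_abs, abs_of_nonneg hε0.le]
    have hmem : z ∈ {z : ℂ | ‖z‖ < 1 ∧
        ‖ζ - z‖ ^ 2 < R' * (1 - ‖z‖ ^ 2)} := by
      refine ⟨by rw [habsz]; linarith, ?_⟩
      rw [hζz, habsz]
      nlinarith [mul_lt_mul_of_pos_right hεR' hε0,
        mul_nonneg hR'.le (mul_nonneg hε0.le (by linarith : (0:ℝ) ≤ 1 - ε))]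
    have hmem2 := hsub hmem
    simp only [mem_setOf_eq, one_mul] at hmem2
    obtain ⟨-, hlt⟩ := hmem2
    have htri : d ≤ ε + ‖η - z‖ := by
      have h1 := norm_sub_le_norm_sub_add_norm_sub ζ z η
      have h2 : ‖z - η‖ = ‖η - z‖ := by
        rw [← norm_neg, neg_sub]
      rw [hζz] at h1
      rw [← h2]; exact h1
    rw [habsz] at hlt
    nlinarith [norm_nonneg (η - z)]
  · intro h
    subst h
    intro R hR
    have e1 := discE_eq ζ hζ u hu hcu R hR
    have e2 := discE_eq ζ hη v hv hcv R hR
    exact ⟨⟨R, hR, by rw [e1, e2]⟩, ⟨R, hR, by rw [e1, e2]⟩⟩
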